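/- arXiv:2310.01307 — 2 statements merged into one kernel-verified Lean document; each statement's English description precedes it below -/
import Mathlib

section
/- Let d > 0, T > 0, K > 1, and B, C > 0 with B² + C² = d² and B² − C² + 2BT > 0. Then (2BT + K·B² + (K−2)·C²)/(2BT + B² − C²) ≥ 1 + (K−1)/(1 + 2T/d) > 1. -/
/-- Main ratio bound of Theorem 1:
`(2BT + KB² + (K−2)C²)/(2BT + B² − C²) ≥ 1 + (K−1)/(1 + 2T/d) > 1`. -/
theorem fna_main_ratio_bound (d T K B C : ℝ) (hd : 0 < d) (hT : 0 < T) (hK : 1 < K)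
    (hB : 0 < B) (hC : 0 < C) (hcircle : B ^ 2 + C ^ 2 = d ^ 2)
    (hpos : 0 < B ^ 2 - C ^ 2 + 2 * B * T) :
    (2 * B * T + K * B ^ 2 + (K - 2) * C ^ 2) / (2 * B * T + B ^ 2 - C ^ 2) ≥
        1 + (K - 1) / (1 + 2 * T / d) ∧
      1 < 1 + (K - 1) / (1 + 2 * T / d) := by
  have hD : 0 < 2 * B * T + B ^ 2 - C ^ 2 := by linarith
  have hE : 0 < 1 + 2 * T / d := by positivity
  have hBd : B ≤ d := by nlinarith [sq_nonneg C, sq_nonneg (B - d), sq_nonneg (B + d)]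
  have h1 : 2 * B * T + B ^ 2 - C ^ 2 ≤ d ^ 2 + 2 * d * T := by nlinarith
  constructor
  · have heq : 1 + (K - 1) / (1 + 2 * T / d) =
        (d + 2 * T + (K - 1) * d) / (d + 2 * T) := by
      have hd' : d ≠ 0 := hd.ne'
      field_simp
    rw [ge_iff_le, heq, div_le_div_iff₀ (by linarith) hD]
    have h5 : K * T * (B ^ 2 + C ^ 2) = K * T * d ^ 2 := by rw [hcircle]
    have h6 : T * (B ^ 2 + C ^ 2) = T * d ^ 2 := by rw [hcircle]
    nlinarith [h5, h6, mul_nonneg (mul_nonneg (by linarith : (0:ℝ) ≤ K - 1) hd.le)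
      (by linarith : (0:ℝ) ≤ d ^ 2 + 2 * d * T - (2 * B * T + B ^ 2 - C ^ 2))]
  · have : 0 < (K - 1) / (1 + 2 * T / d) := div_pos (by linarith) hE
    linarith
end

section
/- For all x ∈ [0, 1], arcsin(x) ≤ x + x³, and hence arccos(x) ≥ π/2 − x − x³. -/
open Real Set

lemma arctan_le_self_aux {y : ℝ} (hy : 0 ≤ y) : Real.arctan y ≤ y := by
  rcases eq_or_lt_of_le hy with h | h
  · simp [← h]
  · have h1 : 0 < Real.arctan y := by
      have := Real.arctan_strictMono h
      rwa [Real.arctan_zero] at this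
    have h2 : Real.arctan y < π / 2 := Real.arctan_lt_pi_div_two y
    have := Real.lt_tan h1 h2
    rw [Real.tan_arctan] at this
    exact this.le

/-- For all `x ∈ [0,1]`, `arcsin x ≤ x + x³`, and hence `arccos x ≥ π/2 − x − x³`. -/
theorem arcsin_le_and_arccos_ge (x : ℝ) (hx : x ∈ Set.Icc (0 : ℝ) 1) :
    Real.arcsin x ≤ x + x ^ 3 ∧ Real.pi / 2 - x - x ^ 3 ≤ Real.arccos x := by
  obtain ⟨hx0, hx1⟩ := hx
  have key : Real.arcsin x ≤ x + x ^ 3 := by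
    rcases le_or_gt x (7/9) with hc | hc
    · -- small case: arcsin x = arctan (x / √(1-x²)) ≤ x / √(1-x²) ≤ x + x³
      have hxlt : x < 1 := by linarith
      have hmem : x ∈ Set.Ioo (-1 : ℝ) 1 := ⟨by linarith, hxlt⟩
      rw [Real.arcsin_eq_arctan hmem]
      have hs : (0:ℝ) < Real.sqrt (1 - x ^ 2) := Real.sqrt_pos.2 (by nlinarith)
      have harg : 0 ≤ x / Real.sqrt (1 - x ^ 2) := div_nonneg hx0 hs.le
      refine (arctan_le_self_aux harg).trans ?_
      rw [div_le_iff₀ hs]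
      have hsq : Real.sqrt (1 - x ^ 2) ^ 2 = 1 - x ^ 2 :=
        Real.sq_sqrt (by nlinarith)
      have hA2 : (Real.sqrt (1 - x ^ 2) * (1 + x ^ 2)) ^ 2 = (1 - x ^ 2) * (1 + x ^ 2) ^ 2 := by
        rw [mul_pow, hsq]
      have hb : x ^ 2 + x ^ 4 ≤ 1 := by
        nlinarith [pow_le_pow_left₀ hx0 hc 2, pow_le_pow_left₀ hx0 hc 4]
      have hA : 1 ≤ Real.sqrt (1 - x ^ 2) * (1 + x ^ 2) := by
        nlinarith [sq_nonneg (Real.sqrt (1 - x ^ 2) * (1 + x ^ 2) - 1), hA2,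
          mul_nonneg (sq_nonneg x) (by linarith : (0:ℝ) ≤ 1 - x ^ 2 - x ^ 4)]
      nlinarith [mul_le_mul_of_nonneg_left hA hx0]
    · -- big case: arcsin x ≤ π/2 - √(2(1-x)) ≤ x + x³
      set t := Real.sqrt (2 * (1 - x)) with ht
      have ht0 : 0 ≤ t := Real.sqrt_nonneg _
      have ht2 : t ^ 2 = 2 * (1 - x) := Real.sq_sqrt (by linarith)
      have htle : t ≤ 2/3 := by
        rw [ht]
        have : (2:ℝ)/3 = Real.sqrt ((2/3)^2) := by
          rw [Real.sqrt_sq]; norm_num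
        rw [this]
        apply Real.sqrt_le_sqrt; nlinarith
      have hcos : x ≤ Real.cos t := by
        have := Real.one_sub_sq_div_two_le_cos (x := t)
        nlinarith
      have hstep : Real.arcsin x ≤ π / 2 - t := by
        have hsin : Real.sin (π / 2 - t) = Real.cos t := Real.sin_pi_div_two_sub t
        rw [Real.arcsin_le_iff_le_sin ⟨by linarith, hx1⟩
          ⟨by nlinarith [Real.pi_gt_three], by nlinarith [Real.pi_gt_three]⟩, hsin]
        exact hcos
      have hpi : π < 3.15 := Real.pi_lt_d2
      have hx' : x = 1 - t ^ 2 / 2 := by linarith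
      have hx3 : x ^ 3 = (1 - t ^ 2 / 2) ^ 3 := by rw [← hx']
      have h6 : t ^ 6 ≤ (2/3) ^ 6 := pow_le_pow_left₀ ht0 htle 6
      nlinarith [hstep, hx', hx3, mul_nonneg ht0 (by linarith : (0:ℝ) ≤ 2/3 - t),
        h6, pow_nonneg ht0 4]
  refine ⟨key, ?_⟩
  rw [Real.arccos]
  linarith
end
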